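/- For a Bayesian network B with distribution Pr_B, and the associated PDG score ⟦M⟧_γ(μ) = Inc(μ) + γ·IDef(μ) with Inc(μ) = Σ_i β_i E_{pa∼μ}[D(μ(X_i | Pa(X_i)=pa) ‖ p_i(·|pa))] and IDef(μ) = Σ_i H_μ(X_i | Pa(X_i)) − H(μ): for every γ > 0 and all weights β_i > 0, Pr_B is the unique minimizer of ⟦M⟧_γ. -/

import Mathlib

open scoped Classical BigOperators

set_option linter.unusedSectionVars false
set_option maxHeartbeats 2000000

noncomputable section

/-- `μ` is a probability distribution on the finite set `W`. -/
def IsDist {W : Type*} [Fintype W] (μ : W → ℝ) : Prop :=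
  (∀ w, 0 ≤ μ w) ∧ ∑ w, μ w = 1

/-- Shannon entropy `H(μ)`. -/
def entropy {W : Type*} [Fintype W] (μ : W → ℝ) : ℝ :=
  ∑ w, Real.negMulLog (μ w)

/-- Relative entropy `D(μ‖ν)`, valued in `EReal` (`⊤` if not absolutely continuous). -/
def klE {W : Type*} [Fintype W] (μ ν : W → ℝ) : EReal :=
  if ∀ w, 0 < μ w → 0 < ν w then
    ((∑ w, if 0 < μ w then μ w * Real.log (μ w / ν w) else 0 : ℝ) : EReal)
  else ⊤

/-- Marginal probability of the event `f = a` under `μ`. -/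
def pm {W A : Type*} [Fintype W] (μ : W → ℝ) (f : W → A) (a : A) : ℝ :=
  ∑ w, if f w = a then μ w else 0

/-- Joint probability of `f = a` and `g = b` under `μ`. -/
def pm2 {W A B : Type*} [Fintype W] (μ : W → ℝ) (f : W → A) (g : W → B)
    (a : A) (b : B) : ℝ :=
  ∑ w, if f w = a ∧ g w = b then μ w else 0

/-- Conditional distribution of `g` given `f = a` under `μ`. -/
def condDist {W A B : Type*} [Fintype W] (μ : W → ℝ) (f : W → A) (g : W → B)
    (a : A) : B → ℝ :=
  fun b => pm2 μ f g a b / pm μ f a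

/-- Conditional entropy `H(g | f)` under `μ`. -/
def condEnt {W A B : Type*} [Fintype W] [Fintype A] [Fintype B]
    (μ : W → ℝ) (f : W → A) (g : W → B) : ℝ :=
  ∑ a, ∑ b, if 0 < pm2 μ f g a b then
    -(pm2 μ f g a b * Real.log (pm2 μ f g a b / pm μ f a)) else 0

section Aux

variable {W A B : Type*} [Fintype W]

lemma aux_mul_log_ge {a b : ℝ} (ha : 0 < a) (hb : 0 < b) :
    a - b ≤ a * Real.log (a / b) := by
  have h := Real.log_le_sub_one_of_pos (div_pos hb ha)
  have h2 : Real.log (a / b) = - Real.log (b / a) := by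
    rw [← Real.log_inv, inv_div]
  have h3 := mul_le_mul_of_nonneg_left h ha.le
  have h4 : a * (b / a - 1) = b - a := by field_simp
  rw [h2, mul_neg]
  linarith

lemma aux_mul_log_gt {a b : ℝ} (ha : 0 < a) (hb : 0 < b) (hne : a ≠ b) :
    a - b < a * Real.log (a / b) := by
  have hba : b / a ≠ 1 := fun h1 => hne (by
    field_simp at h1
    exact h1.symm)
  have h := Real.log_lt_sub_one_of_pos (div_pos hb ha) hba
  have h2 : Real.log (a / b) = - Real.log (b / a) := by
    rw [← Real.log_inv, inv_div]
  have h3 := mul_lt_mul_of_pos_left h ha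
  have h4 : a * (b / a - 1) = b - a := by field_simp
  rw [h2, mul_neg]
  linarith

lemma aux_term_le (a b : W → ℝ) (ha : ∀ w, 0 ≤ a w) (hb : ∀ w, 0 ≤ b w)
    (hab : ∀ w, 0 < a w → 0 < b w) (w : W) :
    a w - b w ≤ (if 0 < a w then a w * Real.log (a w / b w) else 0) := by
  by_cases h : 0 < a w
  · rw [if_pos h]; exact aux_mul_log_ge h (hab w h)
  · have h0 : a w = 0 := le_antisymm (not_lt.1 h) (ha w)
    rw [if_neg h, h0]
    linarith [hb w]

lemma aux_gibbs_le (a b : W → ℝ) (ha : ∀ w, 0 ≤ a w) (hb : ∀ w, 0 ≤ b w)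
    (hab : ∀ w, 0 < a w → 0 < b w) :
    (∑ w, a w) - (∑ w, b w) ≤ ∑ w, (if 0 < a w then a w * Real.log (a w / b w) else 0) := by
  rw [← Finset.sum_sub_distrib]
  exact Finset.sum_le_sum fun w _ => aux_term_le a b ha hb hab w

lemma aux_gibbs_lt (a b : W → ℝ) (ha : ∀ w, 0 ≤ a w) (hb : ∀ w, 0 ≤ b w)
    (hab : ∀ w, 0 < a w → 0 < b w) (hex : ∃ w, 0 < a w ∧ a w ≠ b w) :
    (∑ w, a w) - (∑ w, b w) < ∑ w, (if 0 < a w then a w * Real.log (a w / b w) else 0) := by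
  rw [← Finset.sum_sub_distrib]
  obtain ⟨w0, hw0, hne⟩ := hex
  refine Finset.sum_lt_sum (fun w _ => aux_term_le a b ha hb hab w)
    ⟨w0, Finset.mem_univ _, ?_⟩
  rw [if_pos hw0]
  exact aux_mul_log_gt hw0 (hab _ hw0) hne

lemma aux_exists_ne (a b : W → ℝ) (ha : ∀ w, 0 ≤ a w) (hb : ∀ w, 0 ≤ b w)
    (hs : ∑ w, a w = ∑ w, b w) (hne : a ≠ b) : ∃ w, 0 < a w ∧ a w ≠ b w := by
  by_contra h
  push_neg at h
  apply hne
  have hle : ∀ w ∈ Finset.univ, a w ≤ b w := by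
    intro w _
    rcases (ha w).lt_or_eq with h1 | h1
    · rw [h w h1]
    · rw [← h1]; exact hb w
  have := (Finset.sum_eq_sum_iff_of_le hle).1 hs
  funext w
  exact this w (Finset.mem_univ w)

lemma pm_nonneg (μ : W → ℝ) (hμ : ∀ w, 0 ≤ μ w) (f : W → A) (a : A) :
    0 ≤ pm μ f a :=
  Finset.sum_nonneg fun w _ => by split <;> [exact hμ w; exact le_refl 0]

lemma pm2_nonneg (μ : W → ℝ) (hμ : ∀ w, 0 ≤ μ w) (f : W → A) (g : W → B) (a : A) (b : B) :
    0 ≤ pm2 μ f g a b :=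
  Finset.sum_nonneg fun w _ => by split <;> [exact hμ w; exact le_refl 0]

lemma sum_pm2 [Fintype B] (μ : W → ℝ) (f : W → A) (g : W → B) (a : A) :
    ∑ b, pm2 μ f g a b = pm μ f a := by
  unfold pm2 pm
  rw [Finset.sum_comm]
  refine Finset.sum_congr rfl fun w _ => ?_
  by_cases h : f w = a <;> simp [h]

lemma pm2_le_pm [Fintype B] (μ : W → ℝ) (hμ : ∀ w, 0 ≤ μ w) (f : W → A) (g : W → B)
    (a : A) (b : B) : pm2 μ f g a b ≤ pm μ f a := by
  rw [← sum_pm2 μ f g a]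
  exact Finset.single_le_sum (fun b' _ => pm2_nonneg μ hμ f g a b') (Finset.mem_univ b)

lemma le_pm2 (μ : W → ℝ) (hμ : ∀ w, 0 ≤ μ w) (f : W → A) (g : W → B) (w : W) :
    μ w ≤ pm2 μ f g (f w) (g w) := by
  have := Finset.single_le_sum
    (f := fun w' => if f w' = f w ∧ g w' = g w then μ w' else 0)
    (fun w' _ => by split <;> [exact hμ w'; exact le_refl 0]) (Finset.mem_univ w)
  simpa [pm2] using this

lemma pm_pos_of_pm2 [Fintype B] (μ : W → ℝ) (hμ : ∀ w, 0 ≤ μ w) {f : W → A} {g : W → B}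
    {a : A} {b : B} (h : 0 < pm2 μ f g a b) : 0 < pm μ f a :=
  lt_of_lt_of_le h (pm2_le_pm μ hμ f g a b)

lemma condDist_nonneg (μ : W → ℝ) (hμ : ∀ w, 0 ≤ μ w) (f : W → A) (g : W → B)
    (a : A) (b : B) : 0 ≤ condDist μ f g a b :=
  div_nonneg (pm2_nonneg μ hμ f g a b) (pm_nonneg μ hμ f a)

lemma condDist_pos_iff [Fintype B] (μ : W → ℝ) (hμ : ∀ w, 0 ≤ μ w) (f : W → A) (g : W → B)
    (a : A) (b : B) : 0 < condDist μ f g a b ↔ 0 < pm2 μ f g a b := by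
  constructor
  · intro h
    by_contra h2
    have h0 : pm2 μ f g a b = 0 := le_antisymm (not_lt.1 h2) (pm2_nonneg μ hμ f g a b)
    rw [condDist] at h
    simp [h0] at h
  · intro h
    exact div_pos h (pm_pos_of_pm2 μ hμ h)

lemma pm_mul_cond [Fintype B] (μ : W → ℝ) (hμ : ∀ w, 0 ≤ μ w) (f : W → A) (g : W → B)
    (a : A) (b : B) : pm μ f a * condDist μ f g a b = pm2 μ f g a b := by
  unfold condDist
  by_cases h : pm μ f a = 0
  · have h2 : pm2 μ f g a b = 0 :=
      le_antisymm (h ▸ pm2_le_pm μ hμ f g a b) (pm2_nonneg μ hμ f g a b)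
    simp [h, h2]
  · rw [mul_comm, div_mul_cancel₀ _ h]

lemma aux_fiber2 [Fintype A] [Fintype B] (μ : W → ℝ) (f : W → A) (g : W → B)
    (φ : A → B → ℝ) :
    ∑ a, ∑ b, pm2 μ f g a b * φ a b = ∑ w, μ w * φ (f w) (g w) := by
  unfold pm2
  simp_rw [Finset.sum_mul]
  have h1 : ∀ a : A, (∑ b, ∑ w, (if f w = a ∧ g w = b then μ w else 0) * φ a b)
      = ∑ w, ∑ b, (if f w = a ∧ g w = b then μ w else 0) * φ a b := fun a => Finset.sum_comm
  simp_rw [h1]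
  rw [Finset.sum_comm]
  refine Finset.sum_congr rfl fun w _ => ?_
  simp_rw [ite_mul, zero_mul]
  have h : ∀ a, (∑ b, if f w = a ∧ g w = b then μ w * φ a b else 0)
      = if f w = a then μ w * φ a (g w) else 0 := by
    intro a
    by_cases h : f w = a <;> simp [h]
  simp_rw [h]
  simp

lemma sum_pm [Fintype A] (μ : W → ℝ) (f : W → A) : ∑ a, pm μ f a = ∑ w, μ w := by
  unfold pm
  rw [Finset.sum_comm]
  refine Finset.sum_congr rfl fun w _ => ?_
  simp

lemma aux_coe_sum {ι : Type*} (s : Finset ι) (f : ι → ℝ) :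
    ((∑ i ∈ s, f i : ℝ) : EReal) = ∑ i ∈ s, (f i : EReal) := by
  induction s using Finset.cons_induction with
  | empty => simp
  | cons a s ha ih => rw [Finset.sum_cons, Finset.sum_cons, EReal.coe_add, ih]

lemma aux_mul_ne_bot (x : ℝ) (hx : 0 ≤ x) (y : EReal) (hy : y ≠ ⊥) :
    (x : EReal) * y ≠ ⊥ := by
  induction y using EReal.rec with
  | bot => exact absurd rfl hy
  | coe r => rw [← EReal.coe_mul]; exact EReal.coe_ne_bot _
  | top =>
    rcases hx.lt_or_eq with h | h
    · rw [EReal.coe_mul_top_of_pos h]; exact bot_lt_top.ne'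
    · rw [← h]; simp

lemma aux_sum_ne_bot {ι : Type*} (s : Finset ι) (f : ι → EReal)
    (h : ∀ i ∈ s, f i ≠ ⊥) : ∑ i ∈ s, f i ≠ ⊥ := by
  induction s using Finset.cons_induction with
  | empty => simp
  | cons a s ha ih =>
    rw [Finset.sum_cons, Ne, EReal.add_eq_bot_iff]
    push_neg
    exact ⟨h a (Finset.mem_cons_self a s), ih fun i hi => h i (Finset.mem_cons.2 (Or.inr hi))⟩

lemma aux_sum_top {ι : Type*} (s : Finset ι) (f : ι → EReal)
    (h : ∀ i ∈ s, f i ≠ ⊥) (h2 : ∃ i ∈ s, f i = ⊤) : ∑ i ∈ s, f i = ⊤ := by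
  obtain ⟨i0, hi0, htop⟩ := h2
  rw [← Finset.add_sum_erase _ _ hi0, htop]
  exact EReal.top_add_of_ne_bot
    (aux_sum_ne_bot _ _ fun i hi => h i (Finset.mem_of_mem_erase hi))

lemma aux_pos_of_sum {ι : Type*} [Fintype ι] (f : ι → ℝ) (h : 0 < ∑ i, f i) :
    ∃ i, 0 < f i := by
  by_contra hc
  push_neg at hc
  exact absurd (Finset.sum_nonpos fun i _ => hc i) (not_le.2 h)

lemma klE_ne_bot (μ ν : W → ℝ) : klE μ ν ≠ ⊥ := by
  unfold klE
  split
  · exact EReal.coe_ne_bot _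
  · exact bot_lt_top.ne'

lemma aux_inc_finite [Fintype A] [Fintype B] (μ : W → ℝ) (hμ : ∀ w, 0 ≤ μ w)
    (f : W → A) (g : W → B) (ν : A → B → ℝ)
    (habs : ∀ a b, 0 < pm2 μ f g a b → 0 < ν a b) :
    ∑ a, (pm μ f a : EReal) * klE (condDist μ f g a) (ν a)
      = ((∑ w, μ w * Real.log (condDist μ f g (f w) (g w) / ν (f w) (g w)) : ℝ) : EReal) := by
  have hA : ∀ a, (pm μ f a : EReal) * klE (condDist μ f g a) (ν a)
      = ((∑ b, pm2 μ f g a b * Real.log (condDist μ f g a b / ν a b) : ℝ) : EReal) := by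
    intro a
    have hcond : ∀ b, 0 < condDist μ f g a b → 0 < ν a b := fun b hb =>
      habs a b ((condDist_pos_iff μ hμ f g a b).1 hb)
    rw [klE, if_pos hcond, ← EReal.coe_mul]
    congr 1
    rw [Finset.mul_sum]
    refine Finset.sum_congr rfl fun b _ => ?_
    by_cases h : 0 < pm2 μ f g a b
    · rw [if_pos ((condDist_pos_iff μ hμ f g a b).2 h), ← mul_assoc,
        pm_mul_cond μ hμ f g a b]
    · have h0 : pm2 μ f g a b = 0 := le_antisymm (not_lt.1 h) (pm2_nonneg μ hμ f g a b)
      rw [if_neg fun hc => h ((condDist_pos_iff μ hμ f g a b).1 hc), mul_zero, h0, zero_mul]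
  simp_rw [hA]
  rw [← aux_coe_sum]
  norm_cast
  exact aux_fiber2 μ f g _

lemma aux_inc_top [Fintype A] [Fintype B] (μ : W → ℝ) (hμ : ∀ w, 0 ≤ μ w)
    (f : W → A) (g : W → B) (ν : A → B → ℝ)
    (h : ∃ a b, 0 < pm2 μ f g a b ∧ ¬ 0 < ν a b) :
    ∑ a, (pm μ f a : EReal) * klE (condDist μ f g a) (ν a) = ⊤ := by
  obtain ⟨a0, b0, hpm2, hν⟩ := h
  refine aux_sum_top _ _ (fun a _ => aux_mul_ne_bot _ (pm_nonneg μ hμ f a) _ (klE_ne_bot _ _))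
    ⟨a0, Finset.mem_univ _, ?_⟩
  have hk : klE (condDist μ f g a0) (ν a0) = ⊤ := by
    rw [klE, if_neg]
    push_neg
    exact ⟨b0, (condDist_pos_iff μ hμ f g a0 b0).2 hpm2, not_lt.1 hν⟩
  rw [hk]
  exact EReal.coe_mul_top_of_pos (pm_pos_of_pm2 μ hμ hpm2)

lemma aux_inc_nonneg [Fintype A] [Fintype B] (μ : W → ℝ) (hμ : ∀ w, 0 ≤ μ w)
    (f : W → A) (g : W → B) (ν : A → B → ℝ) (hν : ∀ a, IsDist (ν a))
    (habs : ∀ a b, 0 < pm2 μ f g a b → 0 < ν a b) :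
    0 ≤ ∑ w, μ w * Real.log (condDist μ f g (f w) (g w) / ν (f w) (g w)) := by
  rw [← aux_fiber2 μ f g (fun a b => Real.log (condDist μ f g a b / ν a b))]
  refine Finset.sum_nonneg fun a _ => ?_
  have h := aux_gibbs_le (fun b => pm2 μ f g a b) (fun b => pm μ f a * ν a b)
    (fun b => pm2_nonneg μ hμ f g a b)
    (fun b => mul_nonneg (pm_nonneg μ hμ f a) ((hν a).1 b))
    (fun b hb => mul_pos (pm_pos_of_pm2 μ hμ hb) (habs a b hb))
  have h1 : ∑ b, pm2 μ f g a b = pm μ f a := sum_pm2 μ f g a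
  have h2 : ∑ b, pm μ f a * ν a b = pm μ f a := by
    rw [← Finset.mul_sum, (hν a).2, mul_one]
  have h3 : (∑ b, if 0 < pm2 μ f g a b then
        pm2 μ f g a b * Real.log (pm2 μ f g a b / (pm μ f a * ν a b)) else 0)
      = ∑ b, pm2 μ f g a b * Real.log (condDist μ f g a b / ν a b) := by
    refine Finset.sum_congr rfl fun b _ => ?_
    by_cases hb : 0 < pm2 μ f g a b
    · rw [if_pos hb]
      congr 2
      rw [condDist, div_div]
    · have h0 : pm2 μ f g a b = 0 := le_antisymm (not_lt.1 hb) (pm2_nonneg μ hμ f g a b)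
      rw [if_neg hb, h0, zero_mul]
  rw [h1, h2] at h
  rw [← h3]
  linarith

lemma aux_condEnt_eq [Fintype A] [Fintype B] (μ : W → ℝ) (hμ : ∀ w, 0 ≤ μ w)
    (f : W → A) (g : W → B) :
    condEnt μ f g = ∑ w, μ w * (- Real.log (condDist μ f g (f w) (g w))) := by
  rw [← aux_fiber2 μ f g (fun a b => - Real.log (condDist μ f g a b))]
  unfold condEnt
  refine Finset.sum_congr rfl fun a _ => Finset.sum_congr rfl fun b _ => ?_
  by_cases h : 0 < pm2 μ f g a b
  · rw [if_pos h, mul_neg]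
    rfl
  · have h0 : pm2 μ f g a b = 0 := le_antisymm (not_lt.1 h) (pm2_nonneg μ hμ f g a b)
    rw [if_neg h, h0, zero_mul]

lemma aux_entropy_eq (μ : W → ℝ) : entropy μ = ∑ w, μ w * (- Real.log (μ w)) := by
  unfold entropy
  refine Finset.sum_congr rfl fun w _ => ?_
  rw [Real.negMulLog]
  ring

lemma aux_prod_sum_eq {n : ℕ} {V : Fin n → Type*} [∀ i, Fintype (V i)] [∀ i, Nonempty (V i)]
    (c : (i : Fin n) → (∀ j, V j) → V i → ℝ)
    (hdep : ∀ i (w w' : ∀ j, V j), (∀ j, j < i → w j = w' j) → c i w = c i w')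
    (hsum : ∀ i w, ∑ x, c i w x = 1) :
    ∑ w, ∏ i, c i w (w i) = 1 := by
  induction n with
  | zero => simp
  | succ n ih =>
    have w0 : ∀ j, V j := fun j => Classical.arbitrary _
    have hc0 : ∀ (w : ∀ j, V j), c 0 w = c 0 w0 := fun w =>
      hdep 0 w w0 (fun j hj => absurd hj (Fin.not_lt_zero j))
    have key : ∀ x : V 0, ∑ w2 : ∀ i : Fin n, V (Fin.succ i),
        ∏ i : Fin n, c (Fin.succ i) (Fin.cons x w2) (w2 i) = 1 := by
      intro x
      refine ih (fun i w2 y => c (Fin.succ i) (Fin.cons x w2) y) ?_ ?_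
      · intro i w2 w3 hagree
        refine hdep (Fin.succ i) _ _ fun j hj => ?_
        rcases Fin.eq_zero_or_eq_succ j with rfl | ⟨k, rfl⟩
        · simp
        · simp only [Fin.cons_succ]
          exact hagree k (by simpa [Fin.succ_lt_succ_iff] using hj)
      · intro i w2
        exact hsum (Fin.succ i) (Fin.cons x w2)
    calc ∑ w : ∀ j, V j, ∏ i, c i w (w i)
        = ∑ y : V 0 × (∀ i : Fin n, V (Fin.succ i)),
            ∏ i, c i (Fin.cons y.1 y.2) ((Fin.cons y.1 y.2) i) := by
          rw [← Equiv.sum_comp (Fin.consEquiv V) (fun w => ∏ i, c i w (w i))]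
          rfl
      _ = ∑ x : V 0, ∑ w2 : ∀ i : Fin n, V (Fin.succ i),
            c 0 w0 x *
              ∏ i : Fin n, c (Fin.succ i) (Fin.cons x w2) (w2 i) := by
          rw [Fintype.sum_prod_type]
          refine Finset.sum_congr rfl fun x _ => Finset.sum_congr rfl fun w2 _ => ?_
          rw [Fin.prod_univ_succ, hc0 (Fin.cons x w2)]
          simp
      _ = ∑ x : V 0, c 0 w0 x := by
          refine Finset.sum_congr rfl fun x _ => ?_
          rw [← Finset.mul_sum, key x, mul_one]
      _ = 1 := hsum 0 w0

lemma aux_prod_sum_le {n : ℕ} {V : Fin n → Type*} [∀ i, Fintype (V i)] [∀ i, Nonempty (V i)]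
    (c : (i : Fin n) → (∀ j, V j) → V i → ℝ)
    (hdep : ∀ i (w w' : ∀ j, V j), (∀ j, j < i → w j = w' j) → c i w = c i w')
    (hnn : ∀ i w x, 0 ≤ c i w x) (hsum : ∀ i w, ∑ x, c i w x ≤ 1) :
    ∑ w, ∏ i, c i w (w i) ≤ 1 := by
  induction n with
  | zero => simp
  | succ n ih =>
    have w0 : ∀ j, V j := fun j => Classical.arbitrary _
    have hc0 : ∀ (w : ∀ j, V j), c 0 w = c 0 w0 := fun w =>
      hdep 0 w w0 (fun j hj => absurd hj (Fin.not_lt_zero j))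
    have key : ∀ x : V 0, ∑ w2 : ∀ i : Fin n, V (Fin.succ i),
        ∏ i : Fin n, c (Fin.succ i) (Fin.cons x w2) (w2 i) ≤ 1 := by
      intro x
      refine ih (fun i w2 y => c (Fin.succ i) (Fin.cons x w2) y) ?_ ?_ ?_
      · intro i w2 w3 hagree
        refine hdep (Fin.succ i) _ _ fun j hj => ?_
        rcases Fin.eq_zero_or_eq_succ j with rfl | ⟨k, rfl⟩
        · simp
        · simp only [Fin.cons_succ]
          exact hagree k (by simpa [Fin.succ_lt_succ_iff] using hj)
      · intro i w2 y
        exact hnn (Fin.succ i) (Fin.cons x w2) y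
      · intro i w2
        exact hsum (Fin.succ i) (Fin.cons x w2)
    calc ∑ w : ∀ j, V j, ∏ i, c i w (w i)
        = ∑ y : V 0 × (∀ i : Fin n, V (Fin.succ i)),
            ∏ i, c i (Fin.cons y.1 y.2) ((Fin.cons y.1 y.2) i) := by
          rw [← Equiv.sum_comp (Fin.consEquiv V) (fun w => ∏ i, c i w (w i))]
          rfl
      _ = ∑ x : V 0, ∑ w2 : ∀ i : Fin n, V (Fin.succ i),
            c 0 w0 x *
              ∏ i : Fin n, c (Fin.succ i) (Fin.cons x w2) (w2 i) := by
          rw [Fintype.sum_prod_type]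
          refine Finset.sum_congr rfl fun x _ => Finset.sum_congr rfl fun w2 _ => ?_
          rw [Fin.prod_univ_succ, hc0 (Fin.cons x w2)]
          simp
      _ ≤ ∑ x : V 0, c 0 w0 x := by
          refine Finset.sum_le_sum fun x _ => ?_
          rw [← Finset.mul_sum]
          calc c 0 w0 x * ∑ w2, ∏ i : Fin n, c (Fin.succ i) (Fin.cons x w2) (w2 i)
              ≤ c 0 w0 x * 1 :=
                mul_le_mul_of_nonneg_left (key x) (hnn 0 w0 x)
            _ = c 0 w0 x := mul_one _
      _ ≤ 1 := hsum 0 w0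

end Aux

/-- For a Bayesian network `B` (parents `Pa i ⊆ {j | j < i}`, cpds `p i`), its
distribution `Pr_B(w) = Π_i p_i(w_i | pa_i(w))` is the unique minimizer of the
associated PDG score `⟦M⟧_γ = Inc + γ·IDef`, for every `γ > 0` and all positive
confidence weights `β`. -/
theorem bn_is_unique_pdg_minimizer {n : ℕ} {V : Fin n → Type*}
    [∀ i, Fintype (V i)] [∀ i, Nonempty (V i)]
    (Pa : Fin n → Finset (Fin n)) (hPa : ∀ i, ∀ j ∈ Pa i, j < i)
    (p : (i : Fin n) → (∀ j : {j // j ∈ Pa i}, V j.1) → V i → ℝ)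
    (hp : ∀ i pa, IsDist (p i pa))
    (β : Fin n → ℝ) (hβ : ∀ i, 0 < β i) (γ : ℝ) (hγ : 0 < γ) :
    let paProj : (i : Fin n) → (∀ j, V j) → (∀ j : {j // j ∈ Pa i}, V j.1) :=
      fun i w j => w j.1
    let PrB : (∀ j, V j) → ℝ := fun w => ∏ i, p i (paProj i w) (w i)
    let score : ((∀ j, V j) → ℝ) → EReal := fun μ =>
      (∑ i, (β i : EReal) *
        ∑ pa, (pm μ (paProj i) pa : EReal) *
          klE (condDist μ (paProj i) (fun w => w i) pa) (p i pa)) +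
      ((γ * ((∑ i, condEnt μ (paProj i) (fun w => w i)) - entropy μ) : ℝ) : EReal)
    IsDist PrB ∧ ∀ μ, IsDist μ → μ ≠ PrB → score PrB < score μ := by
  intro paProj PrB score
  have hsd : ∀ ρ : (∀ j, V j) → ℝ, score ρ =
      (∑ i, (β i : EReal) *
        ∑ pa, (pm ρ (paProj i) pa : EReal) *
          klE (condDist ρ (paProj i) (fun w => w i) pa) (p i pa)) +
      ((γ * ((∑ i, condEnt ρ (paProj i) (fun w => w i)) - entropy ρ) : ℝ) : EReal) :=
    fun ρ => rfl
  have hPrBdef : ∀ w, PrB w = ∏ i, p i (paProj i w) (w i) := fun w => rfl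
  have hPrB_nn : ∀ w, 0 ≤ PrB w := fun w => Finset.prod_nonneg fun i _ => (hp i _).1 _
  have hdepp : ∀ (i : Fin n) (w w' : ∀ j, V j), (∀ j, j < i → w j = w' j) →
      (fun x => p i (paProj i w) x) = fun x => p i (paProj i w') x := by
    intro i w w' h
    have hpa : paProj i w = paProj i w' := funext fun j => h j.1 (hPa i j.1 j.2)
    rw [hpa]
  have hPrB_sum : ∑ w, PrB w = 1 :=
    aux_prod_sum_eq (fun i w x => p i (paProj i w) x) hdepp
      (fun i w => (hp i (paProj i w)).2)
  have hPrB : IsDist PrB := ⟨hPrB_nn, hPrB_sum⟩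
  refine ⟨hPrB, ?_⟩
  have MAIN : ∀ ρ : (∀ j, V j) → ℝ, IsDist ρ →
      (∀ (i : Fin n) pa x, 0 < pm2 ρ (paProj i) (fun w => w i) pa x → 0 < p i pa x) →
      ∃ T : ℝ, score ρ = (T : EReal) ∧ 0 ≤ T ∧
        ((∑ w, if 0 < ρ w then ρ w * Real.log (ρ w / PrB w) else 0) = 0 → T = 0) ∧
        (0 < (∑ w, if 0 < ρ w then ρ w * Real.log (ρ w / PrB w) else 0) → 0 < T) := by
    intro ρ hρ habs
    have hpm2pos : ∀ (i : Fin n) w, 0 < ρ w →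
        0 < pm2 ρ (paProj i) (fun w => w i) (paProj i w) (w i) :=
      fun i w hw => lt_of_lt_of_le hw (le_pm2 ρ hρ.1 (paProj i) (fun w => w i) w)
    have hcondpos : ∀ (i : Fin n) w, 0 < ρ w →
        0 < condDist ρ (paProj i) (fun w => w i) (paProj i w) (w i) :=
      fun i w hw => (condDist_pos_iff ρ hρ.1 _ _ _ _).2 (hpm2pos i w hw)
    have hppos : ∀ (i : Fin n) w, 0 < ρ w → 0 < p i (paProj i w) (w i) :=
      fun i w hw => habs i _ _ (hpm2pos i w hw)
    have hPrBpos : ∀ w, 0 < ρ w → 0 < PrB w := fun w hw => by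
      rw [hPrBdef w]; exact Finset.prod_pos fun i _ => hppos i w hw
    have hRnn : ∀ i : Fin n, 0 ≤ ∑ w, ρ w * Real.log
        (condDist ρ (paProj i) (fun w => w i) (paProj i w) (w i) / p i (paProj i w) (w i)) :=
      fun i => aux_inc_nonneg ρ hρ.1 (paProj i) (fun w => w i) (p i) (hp i) (habs i)
    have hCE : ∀ i : Fin n, condEnt ρ (paProj i) (fun w => w i)
        = ∑ w, ρ w * (- Real.log (condDist ρ (paProj i) (fun w => w i) (paProj i w) (w i))) :=
      fun i => aux_condEnt_eq ρ hρ.1 (paProj i) (fun w => w i)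
    have e2 : (∑ i, condEnt ρ (paProj i) (fun w => w i))
        = ∑ w, ρ w * (∑ i, - Real.log (condDist ρ (paProj i) (fun w => w i) (paProj i w) (w i))) := by
      rw [Finset.sum_congr rfl fun i _ => hCE i, Finset.sum_comm]
      exact Finset.sum_congr rfl fun w _ => (Finset.mul_sum _ _ _).symm
    have hq_nn : ∀ w, 0 ≤ ∏ i, condDist ρ (paProj i) (fun w => w i) (paProj i w) (w i) :=
      fun w => Finset.prod_nonneg fun i _ => condDist_nonneg ρ hρ.1 _ _ _ _
    have hq_pos : ∀ w, 0 < ρ w →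
        0 < ∏ i, condDist ρ (paProj i) (fun w => w i) (paProj i w) (w i) :=
      fun w hw => Finset.prod_pos fun i _ => hcondpos i w hw
    have hq_le : (∑ w, ∏ i, condDist ρ (paProj i) (fun w => w i) (paProj i w) (w i)) ≤ 1 := by
      refine aux_prod_sum_le
        (fun i w x => condDist ρ (paProj i) (fun w => w i) (paProj i w) x) ?_ ?_ ?_
      · intro i w w' h
        have hpa : paProj i w = paProj i w' := funext fun j => h j.1 (hPa i j.1 j.2)
        simp only [hpa]
      · intro i w x
        exact condDist_nonneg ρ hρ.1 _ _ _ _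
      · intro i w
        by_cases hpm : pm ρ (paProj i) (paProj i w) = 0
        · simp [condDist, hpm]
        · have : ∑ x, condDist ρ (paProj i) (fun w => w i) (paProj i w) x = 1 := by
            simp only [condDist]
            rw [← Finset.sum_div, sum_pm2, div_self hpm]
          rw [this]
    have hIDef_eq : (∑ i, condEnt ρ (paProj i) (fun w => w i)) - entropy ρ
        = ∑ w, if 0 < ρ w then ρ w * Real.log
            (ρ w / ∏ i, condDist ρ (paProj i) (fun w => w i) (paProj i w) (w i)) else 0 := by
      rw [e2, aux_entropy_eq ρ, ← Finset.sum_sub_distrib]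
      refine Finset.sum_congr rfl fun w _ => ?_
      by_cases hw : 0 < ρ w
      · rw [if_pos hw]
        have hlq : Real.log (∏ i, condDist ρ (paProj i) (fun w => w i) (paProj i w) (w i))
            = ∑ i, Real.log (condDist ρ (paProj i) (fun w => w i) (paProj i w) (w i)) :=
          Real.log_prod fun i _ => (hcondpos i w hw).ne'
        rw [Real.log_div hw.ne' (hq_pos w hw).ne', hlq, Finset.sum_neg_distrib]
        ring
      · have h0 : ρ w = 0 := le_antisymm (not_lt.1 hw) (hρ.1 w)
        rw [if_neg hw, h0]
        ring
    have hIDef_nn : 0 ≤ (∑ i, condEnt ρ (paProj i) (fun w => w i)) - entropy ρ := by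
      rw [hIDef_eq]
      have hg := aux_gibbs_le ρ
        (fun w => ∏ i, condDist ρ (paProj i) (fun w => w i) (paProj i w) (w i))
        hρ.1 hq_nn hq_pos
      rw [hρ.2] at hg
      linarith [hq_le, hg]
    have hKL : (∑ i, ∑ w, ρ w * Real.log
          (condDist ρ (paProj i) (fun w => w i) (paProj i w) (w i) / p i (paProj i w) (w i)))
        + ((∑ i, condEnt ρ (paProj i) (fun w => w i)) - entropy ρ)
        = ∑ w, if 0 < ρ w then ρ w * Real.log (ρ w / PrB w) else 0 := by
      have e1 : (∑ i, ∑ w, ρ w * Real.log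
            (condDist ρ (paProj i) (fun w => w i) (paProj i w) (w i) / p i (paProj i w) (w i)))
          = ∑ w, ρ w * ∑ i, Real.log
            (condDist ρ (paProj i) (fun w => w i) (paProj i w) (w i) / p i (paProj i w) (w i)) := by
        rw [Finset.sum_comm]
        exact Finset.sum_congr rfl fun w _ => (Finset.mul_sum _ _ _).symm
      rw [e1, e2, aux_entropy_eq ρ, ← Finset.sum_sub_distrib, ← Finset.sum_add_distrib]
      refine Finset.sum_congr rfl fun w _ => ?_
      by_cases hw : 0 < ρ w
      · rw [if_pos hw]
        have hsum1 : (∑ i, Real.log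
              (condDist ρ (paProj i) (fun w => w i) (paProj i w) (w i) / p i (paProj i w) (w i)))
            = ∑ i, (Real.log (condDist ρ (paProj i) (fun w => w i) (paProj i w) (w i))
                - Real.log (p i (paProj i w) (w i))) :=
          Finset.sum_congr rfl fun i _ =>
            Real.log_div (hcondpos i w hw).ne' (hppos i w hw).ne'
        have hlogPrB : Real.log (PrB w) = ∑ i, Real.log (p i (paProj i w) (w i)) := by
          rw [hPrBdef w]
          exact Real.log_prod fun i _ => (hppos i w hw).ne'
        rw [Real.log_div hw.ne' (hPrBpos w hw).ne', hsum1, Finset.sum_sub_distrib,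
          Finset.sum_neg_distrib, hlogPrB]
        ring
      · have h0 : ρ w = 0 := le_antisymm (not_lt.1 hw) (hρ.1 w)
        rw [if_neg hw, h0]
        ring
    have hscore : score ρ = (((∑ i, β i * ∑ w, ρ w * Real.log
          (condDist ρ (paProj i) (fun w => w i) (paProj i w) (w i) / p i (paProj i w) (w i)))
        + γ * ((∑ i, condEnt ρ (paProj i) (fun w => w i)) - entropy ρ) : ℝ) : EReal) := by
      rw [hsd ρ]
      have e3 : ∀ i : Fin n, (β i : EReal) *
          (∑ pa, (pm ρ (paProj i) pa : EReal) *
            klE (condDist ρ (paProj i) (fun w => w i) pa) (p i pa))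
          = ((β i * ∑ w, ρ w * Real.log
              (condDist ρ (paProj i) (fun w => w i) (paProj i w) (w i)
                / p i (paProj i w) (w i)) : ℝ) : EReal) := fun i => by
        rw [aux_inc_finite ρ hρ.1 (paProj i) (fun w => w i) (p i) (habs i), ← EReal.coe_mul]
      rw [Finset.sum_congr rfl fun i _ => e3 i, ← aux_coe_sum, ← EReal.coe_add]
    refine ⟨_, hscore, ?_, ?_, ?_⟩
    · exact add_nonneg
        (Finset.sum_nonneg fun i _ => mul_nonneg (hβ i).le (hRnn i))
        (mul_nonneg hγ.le hIDef_nn)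
    · intro h0
      have h1 := hKL.trans h0
      have hsumR : 0 ≤ ∑ i, ∑ w, ρ w * Real.log
          (condDist ρ (paProj i) (fun w => w i) (paProj i w) (w i) / p i (paProj i w) (w i)) :=
        Finset.sum_nonneg fun i _ => hRnn i
      have hResum0 : (∑ i, ∑ w, ρ w * Real.log
          (condDist ρ (paProj i) (fun w => w i) (paProj i w) (w i) / p i (paProj i w) (w i))) = 0 := by
        linarith
      have hIDef0 : (∑ i, condEnt ρ (paProj i) (fun w => w i)) - entropy ρ = 0 := by linarith
      have hReach := (Finset.sum_eq_zero_iff_of_nonneg fun i _ => hRnn i).1 hResum0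
      rw [Finset.sum_eq_zero fun i hi => by rw [hReach i hi, mul_zero], hIDef0, mul_zero,
        add_zero]
    · intro hpos
      rw [← hKL] at hpos
      have hsumRβ : 0 ≤ ∑ i, β i * ∑ w, ρ w * Real.log
          (condDist ρ (paProj i) (fun w => w i) (paProj i w) (w i) / p i (paProj i w) (w i)) :=
        Finset.sum_nonneg fun i _ => mul_nonneg (hβ i).le (hRnn i)
      by_cases hI : 0 < (∑ i, condEnt ρ (paProj i) (fun w => w i)) - entropy ρ
      · have := mul_pos hγ hI
        linarith
      · have hI0 : (∑ i, condEnt ρ (paProj i) (fun w => w i)) - entropy ρ = 0 :=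
          le_antisymm (not_lt.1 hI) hIDef_nn
        have hRpos : 0 < ∑ i, ∑ w, ρ w * Real.log
            (condDist ρ (paProj i) (fun w => w i) (paProj i w) (w i) / p i (paProj i w) (w i)) := by
          rw [hI0, add_zero] at hpos
          exact hpos
        have hex : ∃ i ∈ Finset.univ, 0 < ∑ w, ρ w * Real.log
            (condDist ρ (paProj i) (fun w => w i) (paProj i w) (w i) / p i (paProj i w) (w i)) := by
          by_contra hc
          push_neg at hc
          have : (∑ i, ∑ w, ρ w * Real.log
              (condDist ρ (paProj i) (fun w => w i) (paProj i w) (w i)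
                / p i (paProj i w) (w i))) ≤ 0 :=
            Finset.sum_nonpos fun i hi => hc i hi
          linarith
        obtain ⟨i0, _, hi0⟩ := hex
        have h1 : 0 < ∑ i, β i * ∑ w, ρ w * Real.log
            (condDist ρ (paProj i) (fun w => w i) (paProj i w) (w i) / p i (paProj i w) (w i)) :=
          Finset.sum_pos' (fun i _ => mul_nonneg (hβ i).le (hRnn i))
            ⟨i0, Finset.mem_univ _, mul_pos (hβ i0) hi0⟩
        have h2 : 0 ≤ γ * ((∑ i, condEnt ρ (paProj i) (fun w => w i)) - entropy ρ) :=
          mul_nonneg hγ.le hIDef_nn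
        linarith
  have habsPrB : ∀ (i : Fin n) pa x,
      0 < pm2 PrB (paProj i) (fun w => w i) pa x → 0 < p i pa x := by
    intro i pa x h
    unfold pm2 at h
    obtain ⟨w, hw⟩ := aux_pos_of_sum _ h
    by_cases hcond : paProj i w = pa ∧ w i = x
    · rw [if_pos hcond] at hw
      have hne0 : p i (paProj i w) (w i) ≠ 0 := by
        intro h0
        have : PrB w = 0 := by
          rw [hPrBdef w]
          exact Finset.prod_eq_zero (Finset.mem_univ i) h0
        rw [this] at hw
        exact lt_irrefl 0 hw
      have hfac : 0 < p i (paProj i w) (w i) :=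
        lt_of_le_of_ne ((hp i _).1 _) (Ne.symm hne0)
      rw [← hcond.1, ← hcond.2]
      exact hfac
    · rw [if_neg hcond] at hw
      exact absurd hw (lt_irrefl 0)
  obtain ⟨T0, hT0score, _, hT0z, _⟩ := MAIN PrB hPrB habsPrB
  have hKLPrB : (∑ w, if 0 < PrB w then PrB w * Real.log (PrB w / PrB w) else 0) = 0 :=
    Finset.sum_eq_zero fun w _ => by
      by_cases hw : 0 < PrB w
      · rw [if_pos hw, div_self hw.ne', Real.log_one, mul_zero]
      · rw [if_neg hw]
  have hscorePrB : score PrB = ((0 : ℝ) : EReal) := by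
    rw [hT0score, hT0z hKLPrB]
  intro μ hμ hμne
  by_cases habsμ : ∀ (i : Fin n) pa x,
      0 < pm2 μ (paProj i) (fun w => w i) pa x → 0 < p i pa x
  · obtain ⟨T, hTscore, _, _, hTpos⟩ := MAIN μ hμ habsμ
    have hPrBposμ : ∀ w, 0 < μ w → 0 < PrB w := fun w hw => by
      rw [hPrBdef w]
      exact Finset.prod_pos fun i _ =>
        habsμ i _ _ (lt_of_lt_of_le hw (le_pm2 μ hμ.1 (paProj i) (fun w => w i) w))
    have hKLpos : 0 < ∑ w, if 0 < μ w then μ w * Real.log (μ w / PrB w) else 0 := by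
      have hg := aux_gibbs_lt μ PrB hμ.1 hPrB_nn hPrBposμ
        (aux_exists_ne μ PrB hμ.1 hPrB_nn (by rw [hμ.2, hPrB_sum]) hμne)
      rw [hμ.2, hPrB_sum] at hg
      linarith
    rw [hscorePrB, hTscore]
    exact_mod_cast hTpos hKLpos
  · push_neg at habsμ
    obtain ⟨i0, pa0, x0, hpm2, hnp⟩ := habsμ
    have htop : (∑ i, (β i : EReal) *
        ∑ pa, (pm μ (paProj i) pa : EReal) *
          klE (condDist μ (paProj i) (fun w => w i) pa) (p i pa)) = ⊤ := by
      refine aux_sum_top _ _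
        (fun i _ => aux_mul_ne_bot _ (hβ i).le _
          (aux_sum_ne_bot _ _ fun pa _ =>
            aux_mul_ne_bot _ (pm_nonneg μ hμ.1 _ _) _ (klE_ne_bot _ _)))
        ⟨i0, Finset.mem_univ _, ?_⟩
      rw [aux_inc_top μ hμ.1 (paProj i0) (fun w => w i0) (p i0)
        ⟨pa0, x0, hpm2, not_lt.2 hnp⟩]
      exact EReal.coe_mul_top_of_pos (hβ i0)
    have hstop : score μ = ⊤ := by
      rw [hsd μ, htop]
      exact EReal.top_add_of_ne_bot (EReal.coe_ne_bot _)
    rw [hstop, hscorePrB]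
    exact EReal.coe_lt_top 0
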